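/- Let M > β‖B‖_{L(U,Λ')}/((1−ρ)r) and suppose K ∈ ℕ is large enough that (1/√r)·[ρ^K·√R·((1+ζ) + Mζ) + (1/(1−ρ))·(β/√r)·‖B‖_{L(U,Λ')}] ≤ M. Then for all i ≥ 1 and 0 ≤ j ≤ K, ‖λ_{σ_i} − λ_{σ_i}^{(j)}‖_Λ ≤ (1/√r)·[ρ^j·√R·((1+ζ) + Mζ) + (1/(1−ρ))·(β/√r)·‖B‖_{L(U,Λ')}]·L·ζ^{−i}; in particular ‖λ_{σ_i} − λ_{σ_i}^{(K)}‖_Λ ≤ M·L·ζ^{−i} for all i ≥ 0. -/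

import Mathlib

set_option maxHeartbeats 1000000
set_option synthInstance.maxHeartbeats 400000

lemma aux_cs {V : Type*} [NormedAddCommGroup V] [NormedSpace ℝ V]
    (M : V →L[ℝ] V →L[ℝ] ℝ) (hs : ∀ x y, M x y = M y x) (hp : ∀ x, 0 ≤ M x x)
    (x y : V) : M x y ≤ Real.sqrt (M x x) * Real.sqrt (M y y) := by
  have hq : ∀ t : ℝ, 0 ≤ M y y * (t * t) + (2 * M x y) * t + M x x := by
    intro t
    have h0 := hp (x + t • y)
    simp only [map_add, map_smul, ContinuousLinearMap.add_apply,
      ContinuousLinearMap.smul_apply, smul_eq_mul] at h0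
    rw [hs y x] at h0
    nlinarith [h0]
  have hd := discrim_le_zero hq
  unfold discrim at hd
  have h1 : (M x y) ^ 2 ≤ M x x * M y y := by nlinarith
  calc M x y ≤ |M x y| := le_abs_self _
    _ = Real.sqrt ((M x y) ^ 2) := (Real.sqrt_sq_eq_abs _).symm
    _ ≤ Real.sqrt (M x x * M y y) := Real.sqrt_le_sqrt h1
    _ = Real.sqrt (M x x) * Real.sqrt (M y y) := Real.sqrt_mul (hp x) _

lemma aux_tri {V : Type*} [NormedAddCommGroup V] [NormedSpace ℝ V]
    (M : V →L[ℝ] V →L[ℝ] ℝ) (hs : ∀ x y, M x y = M y x) (hp : ∀ x, 0 ≤ M x x)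
    (x y : V) :
    Real.sqrt (M (x + y) (x + y)) ≤ Real.sqrt (M x x) + Real.sqrt (M y y) := by
  have hcs := aux_cs M hs hp x y
  have hexp : M (x + y) (x + y) = M x x + 2 * M x y + M y y := by
    simp only [map_add, ContinuousLinearMap.add_apply]
    linarith [hs x y, hs y x]
  have h2 : M (x + y) (x + y) ≤ (Real.sqrt (M x x) + Real.sqrt (M y y)) ^ 2 := by
    have sx := Real.sq_sqrt (hp x)
    have sy := Real.sq_sqrt (hp y)
    nlinarith
  calc Real.sqrt (M (x + y) (x + y))
      ≤ Real.sqrt ((Real.sqrt (M x x) + Real.sqrt (M y y)) ^ 2) := Real.sqrt_le_sqrt h2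
    _ = |Real.sqrt (M x x) + Real.sqrt (M y y)| := Real.sqrt_sq_eq_abs _
    _ = _ := abs_of_nonneg (by positivity)

lemma aux_smul {V : Type*} [NormedAddCommGroup V] [NormedSpace ℝ V]
    (M : V →L[ℝ] V →L[ℝ] ℝ) (c : ℝ) (x : V) :
    Real.sqrt (M (c • x) (c • x)) = |c| * Real.sqrt (M x x) := by
  have : M (c • x) (c • x) = c ^ 2 * M x x := by
    simp only [map_smul, ContinuousLinearMap.smul_apply, smul_eq_mul]; ring
  rw [this, Real.sqrt_mul (sq_nonneg c), Real.sqrt_sq_eq_abs]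

theorem stmt_14
    {U Λ : Type*} [NormedAddCommGroup U] [InnerProductSpace ℝ U] [CompleteSpace U]
    [NormedAddCommGroup Λ] [InnerProductSpace ℝ Λ] [CompleteSpace Λ]
    (Ca α Cb β₀ : ℝ) (hα : 0 < α) (hβ₀ : 0 < β₀)
    (a : U →L[ℝ] U →L[ℝ] ℝ) (b : U →L[ℝ] Λ →L[ℝ] ℝ)
    (ha_bdd : ∀ u v, |a u v| ≤ Ca * ‖u‖ * ‖v‖)
    (ha_symm : ∀ u v, a u v = a v u)
    (ha_coer : ∀ v, α * ‖v‖ ^ 2 ≤ a v v)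
    (hb_bdd : ∀ v μ, |b v μ| ≤ Cb * ‖v‖ * ‖μ‖)
    (hb_infsup : ∀ μ : Λ, β₀ * ‖μ‖ ≤ ⨆ w : U, b w μ / ‖w‖)
    (Ainv : (U →L[ℝ] ℝ) →L[ℝ] U)
    (hAinv : ∀ (φ : U →L[ℝ] ℝ) (v : U), a (Ainv φ) v = φ v)
    (f : U →L[ℝ] ℝ) (g : Λ →L[ℝ] ℝ) (u₀ : U) (lam : Λ)
    (hsol : ∀ (v : U) (μ : Λ), a u₀ v + b v lam + b u₀ μ = f v - g μ)
    (Λσ : ℕ → Submodule ℝ Λ)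
    (hclosed : ∀ i, IsClosed ((Λσ i : Set Λ)))
    (hbot : Λσ 0 = ⊥)
    (hnested : ∀ i, Λσ i ≤ Λσ (i + 1))
    (lamσ : ℕ → Λ) (hlamσmem : ∀ i, lamσ i ∈ Λσ i)
    (hGal : ∀ i, ∀ μ ∈ Λσ i, b (Ainv (b.flip (lamσ i))) μ = b (Ainv (b.flip lam)) μ)
    (r R : ℝ) (hr : 0 < r) (hrR : r ≤ R)
    (Mp : (i : ℕ) → (Λσ i) →L[ℝ] (Λσ i) →L[ℝ] ℝ)
    (hMsymm : ∀ i, 1 ≤ i → ∀ μ ν : Λσ i, Mp i μ ν = Mp i ν μ)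
    (hMbdd : ∀ i, 1 ≤ i → ∀ μ : Λσ i, r * ‖μ‖ ^ 2 ≤ Mp i μ μ ∧ Mp i μ μ ≤ R * ‖μ‖ ^ 2)
    (Minv : (i : ℕ) → ((Λσ i) →L[ℝ] ℝ) →L[ℝ] (Λσ i))
    (hMinv : ∀ i, 1 ≤ i → ∀ (ψ : (Λσ i) →L[ℝ] ℝ) (μ : Λσ i), Mp i (Minv i ψ) μ = ψ μ)
    (β ρ : ℝ) (hβ : 0 < β) (hρ0 : 0 < ρ) (hρ1 : ρ < 1)
    (hcontract : ∀ i, 1 ≤ i → ∀ μ : Λσ i,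
        Real.sqrt (Mp i (μ - β • Minv i ((b (Ainv (b.flip (μ : Λ)))).comp (Λσ i).subtypeL))
            (μ - β • Minv i ((b (Ainv (b.flip (μ : Λ)))).comp (Λσ i).subtypeL)))
          ≤ ρ * Real.sqrt (Mp i μ μ))
    (ζ L : ℝ) (hζ : 1 < ζ) (hL : 0 < L)
    (happrox : ∀ i, ‖lam - lamσ i‖ ≤ L * (ζ ^ i)⁻¹)
    (K : ℕ) (uapp : ℕ → ℕ → U) (lamit : ℕ → ℕ → Λ)
    (hlamit0 : lamit 0 K = 0)
    (hlamitmem : ∀ i, 1 ≤ i → ∀ j ≤ K, lamit i j ∈ Λσ i)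
    (hlamitinit : ∀ i, 1 ≤ i → lamit i 0 = lamit (i - 1) K)
    (huapp : ∀ i, 1 ≤ i → ∀ j < K,
        ‖Ainv (f - b.flip (lamit i j)) - uapp i j‖ ≤ L * (ζ ^ i)⁻¹)
    (hlamitstep : ∀ i, 1 ≤ i → ∀ j < K,
        lamit i (j + 1)
          = lamit i j + ((β • Minv i ((b (uapp i j) + g).comp (Λσ i).subtypeL) : Λσ i) : Λ))
    (Mc : ℝ) (hMc : β * ‖b‖ / ((1 - ρ) * r) < Mc)
    (hK : (1 / Real.sqrt r) * (ρ ^ K * Real.sqrt R * ((1 + ζ) + Mc * ζ)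
        + (1 / (1 - ρ)) * (β / Real.sqrt r) * ‖b‖) ≤ Mc) :
    (∀ i, 1 ≤ i → ∀ j ≤ K,
        ‖lamσ i - lamit i j‖
          ≤ (1 / Real.sqrt r) * (ρ ^ j * Real.sqrt R * ((1 + ζ) + Mc * ζ)
              + (1 / (1 - ρ)) * (β / Real.sqrt r) * ‖b‖) * (L * (ζ ^ i)⁻¹))
    ∧ ∀ i : ℕ, ‖lamσ i - lamit i K‖ ≤ Mc * L * (ζ ^ i)⁻¹ := by
  have h1ρ : 0 < 1 - ρ := by linarith
  have hsr : 0 < Real.sqrt r := Real.sqrt_pos.mpr hr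
  have hζ0 : (0:ℝ) < ζ := by linarith
  have hMc0 : 0 < Mc := lt_of_le_of_lt (by positivity) hMc
  -- u₀ is the solution of the primal problem
  have hu0 : Ainv (f - b.flip lam) = u₀ := by
    have h1 : ∀ v, a u₀ v = f v - b v lam := by
      intro v
      have h := hsol v 0
      simp only [map_zero] at h
      linarith
    have h2 : ∀ v, a (Ainv (f - b.flip lam)) v = f v - b v lam := by
      intro v
      rw [hAinv]
      simp [ContinuousLinearMap.sub_apply]
    have h3 : ∀ v, a (Ainv (f - b.flip lam) - u₀) v = 0 := by
      intro v
      rw [map_sub a, ContinuousLinearMap.sub_apply, h1, h2]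
      ring
    have h4 := ha_coer (Ainv (f - b.flip lam) - u₀)
    rw [h3] at h4
    have h5 : ‖Ainv (f - b.flip lam) - u₀‖ ^ 2 ≤ 0 := by nlinarith [h4, sq_nonneg ‖Ainv (f - b.flip lam) - u₀‖]
    have h5' : ‖Ainv (f - b.flip lam) - u₀‖ ^ 2 = 0 := le_antisymm h5 (sq_nonneg _)
    have h6 : ‖Ainv (f - b.flip lam) - u₀‖ = 0 := sq_eq_zero_iff.mp h5'
    exact sub_eq_zero.mp (norm_eq_zero.mp h6)
  have hbu0 : ∀ μ, b u₀ μ = -g μ := by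
    intro μ
    have h := hsol 0 μ
    simp only [map_zero, ContinuousLinearMap.zero_apply] at h
    linarith
  -- key identity
  have hkey : ∀ (n : ℕ) (χ : Λ), ∀ μ ∈ Λσ n,
      b (Ainv (f - b.flip χ)) μ + g μ = b (Ainv (b.flip (lamσ n - χ))) μ := by
    intro n χ μ hμ
    have hsplit : f - b.flip χ = (f - b.flip lam) + (b.flip lam - b.flip χ) := by abel
    rw [hsplit, map_add, hu0, map_add b, ContinuousLinearMap.add_apply, hbu0]
    have h6 : b (Ainv (b.flip lam - b.flip χ)) μ = b (Ainv (b.flip (lamσ n - χ))) μ := by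
      simp only [map_sub, ContinuousLinearMap.sub_apply]
      rw [hGal n μ hμ]
    linarith
  -- inner lemma
  have inner : ∀ i : ℕ, 1 ≤ i →
      ‖lamσ (i-1) - lamit (i-1) K‖ ≤ Mc * L * (ζ ^ (i-1))⁻¹ →
      ∀ j ≤ K, ‖lamσ i - lamit i j‖
        ≤ (1 / Real.sqrt r) * (ρ ^ j * Real.sqrt R * ((1 + ζ) + Mc * ζ)
            + (1 / (1 - ρ)) * (β / Real.sqrt r) * ‖b‖) * (L * (ζ ^ i)⁻¹) := by
    intro i hi hprev
    have mem : ∀ j, j ≤ K → lamσ i - lamit i j ∈ Λσ i :=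
      fun j hj => sub_mem (hlamσmem i) (hlamitmem i hi j hj)
    have hp : ∀ μ : Λσ i, 0 ≤ Mp i μ μ :=
      fun μ => le_trans (by positivity) (hMbdd i hi μ).1
    have hsymm' := hMsymm i hi
    have hlow : ∀ μ : Λσ i, Real.sqrt r * ‖μ‖ ≤ Real.sqrt (Mp i μ μ) := by
      intro μ
      calc Real.sqrt r * ‖μ‖ = Real.sqrt (r * ‖μ‖^2) := by
            rw [Real.sqrt_mul hr.le, Real.sqrt_sq (norm_nonneg _)]
        _ ≤ _ := Real.sqrt_le_sqrt (hMbdd i hi μ).1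
    have hup : ∀ μ : Λσ i, Real.sqrt (Mp i μ μ) ≤ Real.sqrt R * ‖μ‖ := by
      intro μ
      calc Real.sqrt (Mp i μ μ) ≤ Real.sqrt (R * ‖μ‖^2) := Real.sqrt_le_sqrt (hMbdd i hi μ).2
        _ = Real.sqrt R * ‖μ‖ := by
            rw [Real.sqrt_mul (by linarith), Real.sqrt_sq (norm_nonneg _)]
    have hMinvb : ∀ ψ : (Λσ i) →L[ℝ] ℝ,
        Real.sqrt (Mp i (Minv i ψ) (Minv i ψ)) ≤ ‖ψ‖ / Real.sqrt r := by
      intro ψ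
      set w := Minv i ψ with hw
      have h1 : Mp i w w = ψ w := hMinv i hi ψ w
      have h2 : ψ w ≤ ‖ψ‖ * ‖w‖ := le_trans (le_abs_self _) (ψ.le_opNorm w)
      have h3 : Real.sqrt r * ‖w‖ ≤ Real.sqrt (Mp i w w) := hlow w
      have h4 : 0 ≤ Real.sqrt (Mp i w w) := Real.sqrt_nonneg _
      rcases h4.eq_or_lt with h5 | h5
      · rw [← h5]; exact div_nonneg (norm_nonneg ψ) hsr.le
      · have h6 : Real.sqrt (Mp i w w) ^ 2 = Mp i w w := Real.sq_sqrt (hp w)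
        have h7 : (0:ℝ) ≤ ‖ψ‖ := norm_nonneg ψ
        rw [le_div_iff₀ hsr]
        nlinarith
    set E0B := Real.sqrt R * (((1+ζ) + Mc*ζ) * (L * (ζ^i)⁻¹)) with hE0B
    set c := β * (‖b‖ * (L * (ζ ^ i)⁻¹)) / Real.sqrt r with hc
    have hc0 : 0 ≤ c := by positivity
    have hE0 : ‖lamσ i - lamit i 0‖ ≤ ((1+ζ) + Mc*ζ) * (L * (ζ^i)⁻¹) := by
      rw [hlamitinit i hi]
      have hsum : lamσ i - lamit (i-1) K
          = -(lam - lamσ i) + ((lam - lamσ (i-1)) + (lamσ (i-1) - lamit (i-1) K)) := by abel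
      have t1 : ‖lamσ i - lamit (i-1) K‖
          ≤ ‖lam - lamσ i‖ + (‖lam - lamσ (i-1)‖ + ‖lamσ (i-1) - lamit (i-1) K‖) := by
        rw [hsum]
        exact le_trans (norm_add_le _ _) (by rw [norm_neg]; exact add_le_add_right (norm_add_le _ _) _)
      have hpow : (ζ^(i-1))⁻¹ = ζ * (ζ^i)⁻¹ := by
        have hzi : ζ ^ i = ζ^(i-1) * ζ := by
          rw [← pow_succ]
          congr 1
          omega
        rw [hzi]
        field_simp
      have t2 := happrox i
      have t3 := happrox (i-1)
      rw [hpow] at t3 hprev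
      calc ‖lamσ i - lamit (i-1) K‖
          ≤ L * (ζ^i)⁻¹ + (L * (ζ * (ζ^i)⁻¹) + Mc * L * (ζ * (ζ^i)⁻¹)) := by
            refine le_trans t1 (add_le_add t2 (add_le_add t3 hprev))
        _ = ((1+ζ) + Mc*ζ) * (L * (ζ^i)⁻¹) := by ring
    -- recursion in the M-norm
    have hrec : ∀ j, (hj : j ≤ K) →
        Real.sqrt (Mp i ⟨lamσ i - lamit i j, mem j hj⟩ ⟨lamσ i - lamit i j, mem j hj⟩)
          ≤ ρ^j * E0B + c / (1-ρ) := by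
      intro j
      induction j with
      | zero =>
        intro hj
        have h1 : Real.sqrt (Mp i ⟨lamσ i - lamit i 0, mem 0 hj⟩ ⟨lamσ i - lamit i 0, mem 0 hj⟩)
            ≤ Real.sqrt R * ‖lamσ i - lamit i 0‖ := hup _
        have h2 : Real.sqrt R * ‖lamσ i - lamit i 0‖ ≤ E0B := by
          rw [hE0B]
          exact mul_le_mul_of_nonneg_left hE0 (Real.sqrt_nonneg R)
        have h3 : 0 ≤ c / (1-ρ) := by positivity
        rw [pow_zero]
        linarith
      | succ j ih =>
        intro hj1
        have hjK : j < K := Nat.lt_of_succ_le hj1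
        have hj : j ≤ K := hjK.le
        have ihj := ih hj
        set ej : Λσ i := ⟨lamσ i - lamit i j, mem j hj⟩ with hej
        set ν : Λσ i := ej - β • Minv i ((b (Ainv (b.flip ((ej : Λ))))).comp (Λσ i).subtypeL) with hν
        set uχ := Ainv (f - b.flip (lamit i j)) with huχ
        set δ := uapp i j - uχ with hδdef
        set w : Λσ i := Minv i ((b δ).comp (Λσ i).subtypeL) with hwdef
        have hid : (⟨lamσ i - lamit i (j+1), mem (j+1) hj1⟩ : Λσ i) = ν + (-β) • w := by
          apply Subtype.ext
          have hfun : (b (uapp i j) + g).comp (Λσ i).subtypeL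
              = ((b (Ainv (b.flip ((ej : Λ))))).comp (Λσ i).subtypeL) + (b δ).comp (Λσ i).subtypeL := by
            ext μ
            simp only [ContinuousLinearMap.comp_apply, ContinuousLinearMap.add_apply,
              Submodule.subtypeL_apply]
            have hk := hkey i (lamit i j) (μ : Λ) μ.2
            have hδa : b δ (μ:Λ) = b (uapp i j) (μ:Λ) - b uχ (μ:Λ) := by
              rw [hδdef]
              simp [map_sub, ContinuousLinearMap.sub_apply]
            rw [← huχ] at hk
            linarith [hk, hδa]
          have hstep := hlamitstep i hi j hjK
          show lamσ i - lamit i (j+1) = ((ν + (-β) • w : Λσ i) : Λ)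
          rw [hstep, hν, hwdef]
          rw [hfun, map_add, smul_add]
          push_cast
          simp only [Submodule.coe_add, Submodule.coe_smul, AddSubgroupClass.coe_sub,
            SetLike.val_smul, neg_smul]
          have hejv : (ej : Λ) = lamσ i - lamit i j := rfl
          rw [hejv]
          abel
        have hb1 : Real.sqrt (Mp i ν ν) ≤ ρ * Real.sqrt (Mp i ej ej) := hcontract i hi ej
        have hδn : ‖δ‖ ≤ L * (ζ^i)⁻¹ := by
          rw [hδdef, norm_sub_rev]
          exact huapp i hi j hjK
        have hψ : ‖(b δ).comp (Λσ i).subtypeL‖ ≤ ‖b‖ * (L * (ζ^i)⁻¹) := by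
          apply ContinuousLinearMap.opNorm_le_bound _ (by positivity)
          intro μ
          have e1 : ‖((b δ).comp (Λσ i).subtypeL) μ‖ = ‖b δ (μ:Λ)‖ := rfl
          rw [e1]
          calc ‖b δ (μ:Λ)‖ ≤ ‖b δ‖ * ‖(μ:Λ)‖ := (b δ).le_opNorm _
            _ ≤ (‖b‖ * ‖δ‖) * ‖(μ:Λ)‖ :=
                mul_le_mul_of_nonneg_right (b.le_opNorm δ) (norm_nonneg _)
            _ ≤ (‖b‖ * (L * (ζ^i)⁻¹)) * ‖μ‖ := by
                have : ‖(μ:Λ)‖ = ‖μ‖ := rfl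
                rw [this]
                exact mul_le_mul_of_nonneg_right
                  (mul_le_mul_of_nonneg_left hδn (norm_nonneg b)) (norm_nonneg _)
        have hb2 : Real.sqrt (Mp i w w) ≤ (‖b‖ * (L*(ζ^i)⁻¹)) / Real.sqrt r := by
          refine le_trans (hMinvb _) ?_
          gcongr
        have hstep1 : Real.sqrt (Mp i ⟨lamσ i - lamit i (j+1), mem (j+1) hj1⟩
              ⟨lamσ i - lamit i (j+1), mem (j+1) hj1⟩) ≤ ρ * Real.sqrt (Mp i ej ej) + c := by
          rw [hid]
          calc Real.sqrt (Mp i (ν + (-β) • w) (ν + (-β) • w))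
              ≤ Real.sqrt (Mp i ν ν) + Real.sqrt (Mp i ((-β)•w) ((-β)•w)) :=
                aux_tri (Mp i) hsymm' hp ν ((-β)•w)
            _ = Real.sqrt (Mp i ν ν) + β * Real.sqrt (Mp i w w) := by
                rw [aux_smul (Mp i), abs_neg, abs_of_pos hβ]
            _ ≤ ρ * Real.sqrt (Mp i ej ej) + β * ((‖b‖ * (L*(ζ^i)⁻¹)) / Real.sqrt r) :=
                add_le_add hb1 (mul_le_mul_of_nonneg_left hb2 hβ.le)
            _ = ρ * Real.sqrt (Mp i ej ej) + c := by rw [hc]; ring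
        calc Real.sqrt (Mp i ⟨lamσ i - lamit i (j+1), mem (j+1) hj1⟩
              ⟨lamσ i - lamit i (j+1), mem (j+1) hj1⟩)
            ≤ ρ * Real.sqrt (Mp i ej ej) + c := hstep1
          _ ≤ ρ * (ρ^j * E0B + c/(1-ρ)) + c := by
              refine add_le_add_left (mul_le_mul_of_nonneg_left ihj hρ0.le) c
          _ = ρ^(j+1) * E0B + c/(1-ρ) := by
              field_simp
              ring
    -- convert to the Λ-norm
    intro j hj
    have h1 := hrec j hj
    have h2 : Real.sqrt r * ‖lamσ i - lamit i j‖
        ≤ Real.sqrt (Mp i ⟨lamσ i - lamit i j, mem j hj⟩ ⟨lamσ i - lamit i j, mem j hj⟩) := by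
      have := hlow ⟨lamσ i - lamit i j, mem j hj⟩
      exact this
    have h3 : ‖lamσ i - lamit i j‖ ≤ (ρ^j * E0B + c/(1-ρ)) / Real.sqrt r := by
      rw [le_div_iff₀ hsr]
      calc ‖lamσ i - lamit i j‖ * Real.sqrt r = Real.sqrt r * ‖lamσ i - lamit i j‖ := by ring
        _ ≤ _ := le_trans h2 h1
    refine h3.trans_eq ?_
    rw [hE0B, hc]
    field_simp
  -- second part by induction
  have part2 : ∀ i : ℕ, ‖lamσ i - lamit i K‖ ≤ Mc * L * (ζ ^ i)⁻¹ := by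
    intro i
    induction i with
    | zero =>
      have h0 : lamσ 0 = 0 := by
        have := hlamσmem 0
        rw [hbot] at this
        simpa using this
      rw [h0, hlamit0]
      simp only [sub_zero, norm_zero, pow_zero, inv_one, mul_one]
      positivity
    | succ n ih =>
      have hi : 1 ≤ n + 1 := Nat.le_add_left 1 n
      have hprev : ‖lamσ (n+1-1) - lamit (n+1-1) K‖ ≤ Mc * L * (ζ ^ (n+1-1))⁻¹ := by
        simpa using ih
      have h := inner (n+1) hi hprev K le_rfl
      calc ‖lamσ (n+1) - lamit (n+1) K‖
          ≤ (1 / Real.sqrt r) * (ρ ^ K * Real.sqrt R * ((1 + ζ) + Mc * ζ)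
              + (1 / (1 - ρ)) * (β / Real.sqrt r) * ‖b‖) * (L * (ζ ^ (n+1))⁻¹) := h
        _ ≤ Mc * (L * (ζ ^ (n+1))⁻¹) := mul_le_mul_of_nonneg_right hK (by positivity)
        _ = Mc * L * (ζ ^ (n+1))⁻¹ := by ring
  refine ⟨fun i hi j hj => inner i hi (part2 (i-1)) j hj, part2⟩
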